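/- Let K be a field and A = K[s,t,x,y]/(sx^2+txy+sy^2). Then for every integer n ≥ 2, the ideal (x^n, y^n, sxy^{n−1})A of A equals the intersection (x,y)^n·A ∩ (x^n, y^n, sxy^{n−1}, s^n, t^n)A, and both ideals (x,y)^n·A and (x^n, y^n, sxy^{n−1}, s^n, t^n)A are primary ideals of A; in particular this intersection is a primary decomposition of (x^n, y^n, sxy^{n−1})A. -/

import Mathlib

set_option synthInstance.maxHeartbeats 1000000
set_option maxHeartbeats 1000000

open MvPolynomial

/-- The polynomial `sx² + txy + sy²` in `K[s,t,x,y]`, with `s = X 0`, `t = X 1`, `x = X 2`,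
`y = X 3`. -/
noncomputable def sQuad (K : Type) [Field K] : MvPolynomial (Fin 4) K :=
  X 0 * X 2 ^ 2 + X 1 * X 2 * X 3 + X 0 * X 3 ^ 2

/-- The hypersurface `A = K[s,t,x,y]/(sx² + txy + sy²)`. -/
abbrev Aring (K : Type) [Field K] : Type :=
  MvPolynomial (Fin 4) K ⧸ Ideal.span {sQuad K}

/-- The quotient map `K[s,t,x,y] → A`. -/
noncomputable def π (K : Type) [Field K] : MvPolynomial (Fin 4) K →+* Aring K :=
  Ideal.Quotient.mk _

namespace S12

variable {K : Type} [Field K]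

/-- weights: s,t ↦ 0, x,y ↦ 1 -/
def w4 : Fin 4 → ℕ := ![0, 0, 1, 1]

lemma weight_eq (d : Fin 4 →₀ ℕ) : Finsupp.weight w4 d = d 2 + d 3 := by
  rw [Finsupp.weight_apply, Finsupp.sum_fintype]
  · simp [Fin.sum_univ_four, w4]
  · intro i; simp

lemma hX0 : IsWeightedHomogeneous w4 (X 0 : MvPolynomial (Fin 4) K) 0 := by
  have := isWeightedHomogeneous_X (R := K) w4 (0 : Fin 4)
  norm_num [w4] at this; exact this

lemma hX1 : IsWeightedHomogeneous w4 (X 1 : MvPolynomial (Fin 4) K) 0 := by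
  have := isWeightedHomogeneous_X (R := K) w4 (1 : Fin 4)
  norm_num [w4] at this; exact this

lemma hX2 : IsWeightedHomogeneous w4 (X 2 : MvPolynomial (Fin 4) K) 1 := by
  have := isWeightedHomogeneous_X (R := K) w4 (2 : Fin 4)
  norm_num [w4] at this; exact this

lemma hX3 : IsWeightedHomogeneous w4 (X 3 : MvPolynomial (Fin 4) K) 1 := by
  have := isWeightedHomogeneous_X (R := K) w4 (3 : Fin 4)
  norm_num [w4] at this; exact this

lemma hfhom : IsWeightedHomogeneous w4 (sQuad K) 2 := by
  have : IsWeightedHomogeneous w4 (sQuad K) (0 + (1 + 1)) := by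
    refine IsWeightedHomogeneous.add (IsWeightedHomogeneous.add ?_ ?_) ?_
    · have := hX0 (K := K) |>.mul ((hX2 (K := K)).mul (hX2 (K := K)))
      simpa [pow_two, mul_assoc] using this
    · have := ((hX1 (K := K)).mul (hX2 (K := K))).mul (hX3 (K := K))
      simpa using this
    · have := hX0 (K := K) |>.mul ((hX3 (K := K)).mul (hX3 (K := K)))
      simpa [pow_two, mul_assoc] using this
  simpa using this


variable (K) in
noncomputable def Pid : Ideal (MvPolynomial (Fin 4) K) := Ideal.span {X 2, X 3}

variable (K) in
noncomputable def Fid : Ideal (MvPolynomial (Fin 4) K) := Ideal.span {sQuad K}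

lemma mem_Pid_iff {p : MvPolynomial (Fin 4) K} :
    p ∈ Pid K ↔ ∀ d ∈ p.support, d 2 ≠ 0 ∨ d 3 ≠ 0 := by
  have himg : (MvPolynomial.X '' {2, 3} : Set (MvPolynomial (Fin 4) K)) = {X 2, X 3} := by
    rw [Set.image_insert_eq, Set.image_singleton]
  rw [Pid, ← himg, mem_ideal_span_X_image]
  constructor
  · intro h d hd
    obtain ⟨i, hi, hne⟩ := h d hd
    rcases hi with rfl | hi
    · exact Or.inl hne
    · rcases hi with rfl
      exact Or.inr hne
  · intro h d hd
    rcases h d hd with h' | h'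
    · exact ⟨2, by simp, h'⟩
    · exact ⟨3, by simp, h'⟩

lemma supp_of_mem_pow {n : ℕ} {p : MvPolynomial (Fin 4) K} (hp : p ∈ (Pid K) ^ n) :
    ∀ d ∈ p.support, n ≤ d 2 + d 3 := by
  classical
  induction n generalizing p with
  | zero => intro d _; exact Nat.zero_le _
  | succ n ih =>
    rw [pow_succ] at hp
    refine Submodule.mul_induction_on hp ?_ ?_
    · intro m hm q hq d hd
      have hsub := MvPolynomial.support_mul m q hd
      rw [Finset.mem_add] at hsub
      obtain ⟨d1, hd1, d2, hd2, rfl⟩ := hsub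
      have h1 := ih hm d1 hd1
      have h2 := mem_Pid_iff.mp hq d2 hd2
      simp only [Finsupp.add_apply]
      omega
    · intro x y hx hy d hd
      have hsub : d ∈ x.support ∪ y.support := MvPolynomial.support_add hd
      rcases Finset.mem_union.mp hsub with h | h
      exacts [hx d h, hy d h]

lemma mem_pow_of_supp {n : ℕ} {p : MvPolynomial (Fin 4) K}
    (hp : ∀ d ∈ p.support, n ≤ d 2 + d 3) : p ∈ (Pid K) ^ n := by
  classical
  rw [← p.support_sum_monomial_coeff]
  refine Ideal.sum_mem _ ?_
  intro d hd
  have hwd := hp d hd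
  set a := min (d 2) n with ha
  set b := n - a with hb
  have hab : a + b = n := by omega
  have hle : (Finsupp.single 2 a + Finsupp.single 3 b : Fin 4 →₀ ℕ) ≤ d := by
    intro i
    fin_cases i <;> simp [Finsupp.single_apply] <;> omega
  have hmono : monomial d (coeff d p) =
      X 2 ^ a * X 3 ^ b *
        monomial (d - (Finsupp.single 2 a + Finsupp.single 3 b)) (coeff d p) := by
    rw [X_pow_eq_monomial, X_pow_eq_monomial, monomial_mul, monomial_mul]
    rw [one_mul, one_mul, add_tsub_cancel_of_le hle]
  rw [hmono]
  refine Ideal.mul_mem_right _ _ ?_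
  have : (Pid K) ^ n = (Pid K) ^ a * (Pid K) ^ b := by rw [← pow_add, hab]
  rw [this]
  refine Ideal.mul_mem_mul (Ideal.pow_mem_pow ?_ _) (Ideal.pow_mem_pow ?_ _)
  · exact Ideal.subset_span (by simp)
  · exact Ideal.subset_span (by simp)

lemma phi_kill {n k : ℕ} {p : MvPolynomial (Fin 4) K} (hp : p ∈ (Pid K) ^ n) (hk : k < n) :
    weightedHomogeneousComponent w4 k p = 0 := by
  classical
  ext d
  rw [coeff_weightedHomogeneousComponent, coeff_zero]
  split_ifs with h
  · by_contra hc
    have := supp_of_mem_pow hp d (mem_support_iff.mpr hc)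
    rw [weight_eq] at h
    omega
  · rfl

lemma coeff_trunc {N : ℕ} (p : MvPolynomial (Fin 4) K) (d : Fin 4 →₀ ℕ) :
    coeff d (∑ k ∈ Finset.range N, weightedHomogeneousComponent w4 k p) =
      if d 2 + d 3 < N then coeff d p else 0 := by
  classical
  rw [coeff_sum]
  simp_rw [coeff_weightedHomogeneousComponent, weight_eq]
  rw [Finset.sum_ite_eq (Finset.range N) (d 2 + d 3) (fun _ => coeff d p)]
  simp [Finset.mem_range]


lemma phi_mul_hom {v : MvPolynomial (Fin 4) K} {m : ℕ}
    (hv : IsWeightedHomogeneous w4 v m) (h : MvPolynomial (Fin 4) K) (k : ℕ) :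
    weightedHomogeneousComponent w4 (k + m) (h * v) =
      weightedHomogeneousComponent w4 k h * v := by
  classical
  induction h using MvPolynomial.induction_on' with
  | monomial d c =>
    have hmon : IsWeightedHomogeneous w4 (monomial d c : MvPolynomial (Fin 4) K)
        (Finsupp.weight w4 d) := isWeightedHomogeneous_monomial _ _ _ rfl
    have hprod : IsWeightedHomogeneous w4 ((monomial d c : MvPolynomial (Fin 4) K) * v)
        (Finsupp.weight w4 d + m) := hmon.mul hv
    by_cases hdk : Finsupp.weight w4 d = k
    · subst hdk
      rw [hprod.weightedHomogeneousComponent_same, hmon.weightedHomogeneousComponent_same]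
    · rw [hprod.weightedHomogeneousComponent_ne _ (by omega),
        hmon.weightedHomogeneousComponent_ne _ (by omega), zero_mul]
  | add p q hp hq =>
    rw [add_mul, map_add, map_add, hp, hq, add_mul]

lemma phi_mul_hom_lt {v : MvPolynomial (Fin 4) K} {m : ℕ}
    (hv : IsWeightedHomogeneous w4 v m) (h : MvPolynomial (Fin 4) K) {k : ℕ} (hk : k < m) :
    weightedHomogeneousComponent w4 k (h * v) = 0 := by
  classical
  induction h using MvPolynomial.induction_on' with
  | monomial d c =>
    have hmon : IsWeightedHomogeneous w4 (monomial d c : MvPolynomial (Fin 4) K)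
        (Finsupp.weight w4 d) := isWeightedHomogeneous_monomial _ _ _ rfl
    exact (hmon.mul hv).weightedHomogeneousComponent_ne _ (by omega)
  | add p q hp hq =>
    rw [add_mul, map_add, hp, hq, add_zero]


lemma dvd_unit2 {u : Polynomial (MvPolynomial (Fin 2) K)}
    (h1 : u ∣ Polynomial.X ^ 2 + Polynomial.C (X 1 ^ 2))
    (h2 : u ∣ Polynomial.C (X 0 * X 1) * Polynomial.X) : IsUnit u := by
  classical
  obtain ⟨v, hv⟩ := h1
  obtain ⟨w, hw⟩ := h2
  have hY2 : (X 1 ^ 2 : MvPolynomial (Fin 2) K) ≠ 0 := pow_ne_zero _ (X_ne_zero _)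
  have hTY : (X 0 * X 1 : MvPolynomial (Fin 2) K) ≠ 0 :=
    mul_ne_zero (X_ne_zero _) (X_ne_zero _)
  have hd1 : (Polynomial.X ^ 2 + Polynomial.C (X 1 ^ 2) :
      Polynomial (MvPolynomial (Fin 2) K)).natDegree = 2 := Polynomial.natDegree_X_pow_add_C
  have hd2 : (Polynomial.C (X 0 * X 1) * Polynomial.X :
      Polynomial (MvPolynomial (Fin 2) K)).natDegree = 1 := Polynomial.natDegree_C_mul_X _ hTY
  have hne1 : (Polynomial.X ^ 2 + Polynomial.C (X 1 ^ 2) :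
      Polynomial (MvPolynomial (Fin 2) K)) ≠ 0 := by
    intro h; rw [h] at hd1; simp at hd1
  have hne2 : (Polynomial.C (X 0 * X 1) * Polynomial.X :
      Polynomial (MvPolynomial (Fin 2) K)) ≠ 0 := by
    intro h; rw [h] at hd2; simp at hd2
  have hu0 : u ≠ 0 := by rintro rfl; rw [zero_mul] at hv; exact hne1 hv
  have hv0 : v ≠ 0 := by rintro rfl; rw [mul_zero] at hv; exact hne1 hv
  have hw0 : w ≠ 0 := by rintro rfl; rw [mul_zero] at hw; exact hne2 hw
  have hdeg1 : u.natDegree + v.natDegree = 2 := by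
    rw [← Polynomial.natDegree_mul hu0 hv0, ← hv, hd1]
  have hdeg2 : u.natDegree + w.natDegree = 1 := by
    rw [← Polynomial.natDegree_mul hu0 hw0, ← hw, hd2]
  have hcase : u.natDegree = 0 ∨ u.natDegree = 1 := by omega
  rcases hcase with h0 | h1
  · obtain ⟨c, hc⟩ := Polynomial.natDegree_eq_zero.mp h0
    have hco : (1 : MvPolynomial (Fin 2) K) = c * v.coeff 2 := by
      have := congrArg (fun p => Polynomial.coeff p 2) hv
      simpa only [← hc, Polynomial.coeff_add, Polynomial.coeff_C_mul, Polynomial.coeff_X_pow,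
        Polynomial.coeff_C, if_pos rfl, OfNat.ofNat_ne_zero, if_false, ↓reduceIte, add_zero,
        if_neg (two_ne_zero)] using this
    rw [← hc, Polynomial.isUnit_C]
    exact IsUnit.of_mul_eq_one _ hco.symm
  · exfalso
    have hwdeg : w.natDegree = 0 := by omega
    obtain ⟨c, hc⟩ := Polynomial.natDegree_eq_zero.mp hwdeg
    have hc0 : c ≠ 0 := by rintro rfl; rw [← hc, map_zero, mul_zero] at hw; exact hne2 hw
    have hu00 : u.coeff 0 * c = 0 := by
      have := congrArg (fun p => Polynomial.coeff p 0) hw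
      simpa [← hc, Polynomial.mul_coeff_zero] using this.symm
    have hu0c : u.coeff 0 = 0 := by
      rcases mul_eq_zero.mp hu00 with h | h
      · exact h
      · exact absurd h hc0
    have h5 := congrArg (fun p => Polynomial.coeff p 0) hv
    simp only [Polynomial.coeff_add, Polynomial.coeff_X_pow, Polynomial.coeff_C,
      Polynomial.mul_coeff_zero, hu0c, zero_mul, if_pos rfl] at h5
    rw [if_neg (by norm_num : (0:ℕ) ≠ 2)] at h5
    rw [zero_add] at h5
    exact hY2 h5

lemma dvd_unit3 {u : MvPolynomial (Fin 3) K}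
    (h1 : u ∣ (X 1 ^ 2 + X 2 ^ 2)) (h2 : u ∣ (X 0 * X 1 * X 2)) : IsUnit u := by
  classical
  let e : MvPolynomial (Fin 3) K ≃ₐ[K] Polynomial (MvPolynomial (Fin 2) K) :=
    (renameEquiv K (Equiv.swap (0 : Fin 3) 1)).trans (finSuccEquiv K 2)
  have e1 : (1 : Fin 3) = Fin.succ 0 := rfl
  have e2 : (2 : Fin 3) = Fin.succ 1 := rfl
  have hswap0 : Equiv.swap (0 : Fin 3) 1 0 = 1 := Equiv.swap_apply_left _ _
  have hswap1 : Equiv.swap (0 : Fin 3) 1 1 = 0 := Equiv.swap_apply_right _ _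
  have hswap2 : Equiv.swap (0 : Fin 3) 1 2 = 2 :=
    Equiv.swap_apply_of_ne_of_ne (by decide) (by decide)
  have he1 : e (X 1 ^ 2 + X 2 ^ 2) =
      Polynomial.X ^ 2 + Polynomial.C (X 1 ^ 2) := by
    simp only [e, AlgEquiv.trans_apply, map_add, map_pow, renameEquiv_apply, rename_X,
      hswap1, hswap2]
    rw [e2]
    simp only [finSuccEquiv_X_zero, finSuccEquiv_X_succ, ← map_pow]
  have he2 : e (X 0 * X 1 * X 2) = Polynomial.C (X 0 * X 1) * Polynomial.X := by
    simp only [e, AlgEquiv.trans_apply, map_mul, renameEquiv_apply, rename_X,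
      hswap0, hswap1, hswap2]
    rw [e1, e2]
    simp only [finSuccEquiv_X_zero, finSuccEquiv_X_succ]
    ring
  have hu : IsUnit (e u) := by
    apply dvd_unit2 (K := K)
    · rw [← he1]; exact map_dvd e h1
    · rw [← he2]; exact map_dvd e h2
  have := hu.map e.symm
  rwa [AlgEquiv.symm_apply_apply] at this

lemma irreducible_f : Irreducible (sQuad K) := by
  classical
  set e := finSuccEquiv K 3 with he
  have e1 : (1 : Fin 4) = Fin.succ 0 := rfl
  have e2 : (2 : Fin 4) = Fin.succ 1 := rfl
  have e3 : (3 : Fin 4) = Fin.succ 2 := rfl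
  have hef : e (sQuad K) = Polynomial.C (X 1 ^ 2 + X 2 ^ 2) * Polynomial.X
      + Polynomial.C (X 0 * X 1 * X 2) := by
    rw [sQuad, e1, e2, e3]
    simp only [map_add, map_mul, map_pow, finSuccEquiv_X_zero, finSuccEquiv_X_succ, he]
    ring
  have hq0 : (X 1 ^ 2 + X 2 ^ 2 : MvPolynomial (Fin 3) K) ≠ 0 := by
    intro h
    have := congrArg (aeval (fun i : Fin 3 => if i = 1 then (1 : K) else 0)) h
    simp at this
  have hdeg : (e (sQuad K)).natDegree = 1 := by
    rw [hef]; exact Polynomial.natDegree_linear hq0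
  have haux : ∀ a b : MvPolynomial (Fin 4) K, sQuad K = a * b →
      (e a).natDegree = 0 → IsUnit a := by
    intro a b hab h0
    obtain ⟨c, hc⟩ := Polynomial.natDegree_eq_zero.mp h0
    have heq : Polynomial.C c * e b = Polynomial.C (X 1 ^ 2 + X 2 ^ 2) * Polynomial.X
        + Polynomial.C (X 0 * X 1 * X 2) := by
      rw [hc, ← map_mul, ← hab, hef]
    have hdvd1 : c ∣ (X 1 ^ 2 + X 2 ^ 2 : MvPolynomial (Fin 3) K) := by
      refine ⟨(e b).coeff 1, ?_⟩
      have h6 := congrArg (fun p => Polynomial.coeff p 1) heq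
      simp only [Polynomial.coeff_add, Polynomial.coeff_C_mul, Polynomial.coeff_C,
        Polynomial.coeff_X_one, mul_one, if_neg (one_ne_zero), add_zero] at h6
      exact h6.symm
    have hdvd2 : c ∣ (X 0 * X 1 * X 2 : MvPolynomial (Fin 3) K) := by
      refine ⟨(e b).coeff 0, ?_⟩
      have h7 := congrArg (fun p => Polynomial.coeff p 0) heq
      simp only [Polynomial.coeff_add, Polynomial.mul_coeff_zero, Polynomial.coeff_C,
        Polynomial.coeff_C_mul, Polynomial.coeff_X_zero, mul_zero, if_pos rfl, zero_add] at h7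
      exact h7.symm
    have hcu : IsUnit c := dvd_unit3 hdvd1 hdvd2
    have : IsUnit (e a) := by rw [← hc]; exact Polynomial.isUnit_C.mpr hcu
    have := this.map e.symm
    rwa [AlgEquiv.symm_apply_apply] at this
  constructor
  · intro hu
    have := Polynomial.natDegree_eq_zero_of_isUnit (hu.map e)
    rw [hdeg] at this; exact one_ne_zero this
  · intro a b hab
    have hea : e a ≠ 0 := by
      intro h
      rw [hab, map_mul, h, zero_mul] at hdeg
      simp at hdeg
    have heb : e b ≠ 0 := by
      intro h
      rw [hab, map_mul, h, mul_zero] at hdeg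
      simp at hdeg
    have hsum : (e a).natDegree + (e b).natDegree = 1 := by
      rw [hab, map_mul, Polynomial.natDegree_mul hea heb] at hdeg
      exact hdeg
    have hcase : (e a).natDegree = 0 ∨ (e b).natDegree = 0 := by omega
    rcases hcase with h0 | h0
    · exact Or.inl (haux a b hab h0)
    · exact Or.inr (haux b a (by rw [hab, mul_comm]) h0)

lemma prime_f : Prime (sQuad K) :=
  (UniqueFactorizationMonoid.irreducible_iff_prime).mp irreducible_f


variable (K) in
noncomputable def J1 (n : ℕ) : Ideal (MvPolynomial (Fin 4) K) :=
  Ideal.span {X 2 ^ n, X 3 ^ n, X 0 * X 2 * X 3 ^ (n - 1)}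

variable (K) in
noncomputable def Jf (n : ℕ) : Ideal (MvPolynomial (Fin 4) K) := J1 K n ⊔ Fid K

variable (K) in
noncomputable def Uid (n : ℕ) : Ideal (MvPolynomial (Fin 4) K) :=
  Ideal.span {q | ∃ i j : ℕ, i + j = n ∧ 1 ≤ i ∧ 1 ≤ j ∧ q = X 2 ^ i * X 3 ^ j}

lemma f_mem_F : sQuad K ∈ Fid K := Ideal.subset_span rfl

lemma xn_mem (n : ℕ) : (X 2 ^ n : MvPolynomial (Fin 4) K) ∈ J1 K n :=
  Ideal.subset_span (by simp)

lemma yn_mem (n : ℕ) : (X 3 ^ n : MvPolynomial (Fin 4) K) ∈ J1 K n :=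
  Ideal.subset_span (by simp)

lemma sxy_mem (n : ℕ) : (X 0 * X 2 * X 3 ^ (n - 1) : MvPolynomial (Fin 4) K) ∈ J1 K n :=
  Ideal.subset_span (by simp)

lemma lemA {n : ℕ} (hn : 1 ≤ n) :
    ∀ i j : ℕ, i + j = n → (X 0 : MvPolynomial (Fin 4) K) ^ i * (X 2 ^ i * X 3 ^ j) ∈ Jf K n := by
  intro i
  induction i using Nat.strong_induction_on with
  | _ i ih =>
    match i with
    | 0 =>
      intro j hj
      have hj' : n = j := by omega
      subst hj'
      simp only [pow_zero, one_mul]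
      exact Ideal.mem_sup_left (yn_mem _)
    | 1 =>
      intro j hj
      have hj' : n - 1 = j := by omega
      subst hj'
      have : (X 0 : MvPolynomial (Fin 4) K) ^ 1 * (X 2 ^ 1 * X 3 ^ (n - 1)) =
          X 0 * X 2 * X 3 ^ (n - 1) := by ring
      rw [this]
      exact Ideal.mem_sup_left (sxy_mem n)
    | (i + 2) =>
      intro j hj
      have key : (X 0 : MvPolynomial (Fin 4) K) ^ (i + 2) * (X 2 ^ (i + 2) * X 3 ^ j) =
          X 0 ^ (i + 1) * X 2 ^ i * X 3 ^ j * sQuad K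
            - X 1 * (X 0 ^ (i + 1) * (X 2 ^ (i + 1) * X 3 ^ (j + 1)))
            - X 0 ^ 2 * (X 0 ^ i * (X 2 ^ i * X 3 ^ (j + 2))) := by
        rw [sQuad]; ring
      rw [key]
      refine sub_mem (sub_mem ?_ ?_) ?_
      · exact Ideal.mem_sup_right (Ideal.mul_mem_left _ _ f_mem_F)
      · exact Ideal.mul_mem_left _ _ (ih (i + 1) (by omega) (j + 1) (by omega))
      · exact Ideal.mul_mem_left _ _ (ih i (by omega) (j + 2) (by omega))

lemma lemA' {n : ℕ} (hn : 1 ≤ n) {i j : ℕ} (hij : i + j = n) :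
    (X 0 : MvPolynomial (Fin 4) K) ^ n * (X 2 ^ i * X 3 ^ j) ∈ Jf K n := by
  have hle : i ≤ n := by omega
  have hn' : n - i + i = n := by omega
  have hid : (X 0 : MvPolynomial (Fin 4) K) ^ n * (X 2 ^ i * X 3 ^ j) =
      X 0 ^ (n - i) * (X 0 ^ i * (X 2 ^ i * X 3 ^ j)) := by
    conv_rhs => rw [← mul_assoc, ← pow_add, hn']
  rw [hid]
  exact Ideal.mul_mem_left _ _ (lemA hn i j hij)

lemma lemTB1 {n : ℕ} (hn : 1 ≤ n) :
    ∀ q ∈ Uid K n, (X 1 : MvPolynomial (Fin 4) K) * q ∈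
      Jf K n ⊔ Ideal.span {(X 0 : MvPolynomial (Fin 4) K)} * Uid K n := by
  intro q hq
  refine Submodule.span_induction ?_ ?_ ?_ ?_ hq
  · rintro p ⟨i, j, hij, hi, hj, rfl⟩
    obtain ⟨i', rfl⟩ : ∃ i', i = i' + 1 := ⟨i - 1, by omega⟩
    obtain ⟨j', rfl⟩ : ∃ j', j = j' + 1 := ⟨j - 1, by omega⟩
    have key : (X 1 : MvPolynomial (Fin 4) K) * (X 2 ^ (i' + 1) * X 3 ^ (j' + 1)) =
        X 2 ^ i' * X 3 ^ j' * sQuad K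
          - X 0 * (X 2 ^ (i' + 2) * X 3 ^ j') - X 0 * (X 2 ^ i' * X 3 ^ (j' + 2)) := by
      rw [sQuad]; ring
    rw [key]
    refine sub_mem (sub_mem ?_ ?_) ?_
    · exact Ideal.mem_sup_left (Ideal.mem_sup_right (Ideal.mul_mem_left _ _ f_mem_F))
    · rcases Nat.eq_zero_or_pos j' with hj0 | hj0
      · subst hj0
        have : i' + 2 = n := by omega
        subst this
        refine Ideal.mem_sup_left (Ideal.mem_sup_left ?_)
        have : (X 0 : MvPolynomial (Fin 4) K) * (X 2 ^ (i' + 2) * X 3 ^ 0) =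
            X 0 * X 2 ^ (i' + 2) := by ring
        rw [this]
        exact Ideal.mul_mem_left _ _ (xn_mem _)
      · refine Ideal.mem_sup_right ?_
        exact Ideal.mul_mem_mul (Ideal.mem_span_singleton_self _)
          (Ideal.subset_span ⟨i' + 2, j', by omega, by omega, by omega, rfl⟩)
    · rcases Nat.eq_zero_or_pos i' with hi0 | hi0
      · subst hi0
        have : j' + 2 = n := by omega
        subst this
        refine Ideal.mem_sup_left (Ideal.mem_sup_left ?_)
        have : (X 0 : MvPolynomial (Fin 4) K) * (X 2 ^ 0 * X 3 ^ (j' + 2)) =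
            X 0 * X 3 ^ (j' + 2) := by ring
        rw [this]
        exact Ideal.mul_mem_left _ _ (yn_mem _)
      · refine Ideal.mem_sup_right ?_
        exact Ideal.mul_mem_mul (Ideal.mem_span_singleton_self _)
          (Ideal.subset_span ⟨i', j' + 2, by omega, by omega, by omega, rfl⟩)
  · rw [mul_zero]; exact zero_mem _
  · intro p q _ _ hp hq
    rw [mul_add]; exact add_mem hp hq
  · intro r p _ hp
    rw [smul_eq_mul, mul_left_comm]
    exact Ideal.mul_mem_left _ _ hp

lemma lemTBk {n : ℕ} (hn : 1 ≤ n) (k : ℕ) :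
    ∀ q ∈ Uid K n, (X 1 : MvPolynomial (Fin 4) K) ^ k * q ∈
      Jf K n ⊔ Ideal.span {(X 0 : MvPolynomial (Fin 4) K) ^ k} * Uid K n := by
  induction k with
  | zero =>
    intro q hq
    simp only [pow_zero, one_mul, Ideal.span_singleton_one, Ideal.top_mul]
    exact Ideal.mem_sup_right hq
  | succ k ihk =>
    intro q hq
    have hstep : ∀ z ∈ Jf K n ⊔ Ideal.span {(X 0 : MvPolynomial (Fin 4) K) ^ k} * Uid K n,
        (X 1 : MvPolynomial (Fin 4) K) * z ∈
          Jf K n ⊔ Ideal.span {(X 0 : MvPolynomial (Fin 4) K) ^ (k + 1)} * Uid K n := by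
      intro z hz
      obtain ⟨z1, hz1, z2, hz2, rfl⟩ := Submodule.mem_sup.mp hz
      rw [mul_add]
      refine add_mem (Ideal.mem_sup_left (Ideal.mul_mem_left _ _ hz1)) ?_
      refine Submodule.mul_induction_on hz2 ?_ ?_
      · intro m1 hm1 m2 hm2
        obtain ⟨r, rfl⟩ := Ideal.mem_span_singleton'.mp hm1
        have hI : (X 1 : MvPolynomial (Fin 4) K) * (r * X 0 ^ k * m2) =
            r * (X 0 ^ k * (X 1 * m2)) := by ring
        rw [hI]
        have h2 := lemTB1 hn m2 hm2
        obtain ⟨w1, hw1, w2, hw2, hw⟩ := Submodule.mem_sup.mp h2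
        rw [← hw]
        rw [mul_add, mul_add]
        refine add_mem (Ideal.mem_sup_left (Ideal.mul_mem_left _ _
          (Ideal.mul_mem_left _ _ hw1))) ?_
        refine Ideal.mem_sup_right (Ideal.mul_mem_left _ _ ?_)
        have : (X 0 : MvPolynomial (Fin 4) K) ^ k * w2 ∈
            Ideal.span {(X 0 : MvPolynomial (Fin 4) K) ^ k} *
              (Ideal.span {(X 0 : MvPolynomial (Fin 4) K)} * Uid K n) :=
          Ideal.mul_mem_mul (Ideal.mem_span_singleton_self _) hw2
        rw [← mul_assoc, Ideal.span_singleton_mul_span_singleton, ← pow_succ] at this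
        exact this
      · intro u v hu hv
        rw [mul_add]; exact add_mem hu hv
    have hI : (X 1 : MvPolynomial (Fin 4) K) ^ (k + 1) * q = X 1 * (X 1 ^ k * q) := by ring
    rw [hI]
    exact hstep _ (ihk q hq)

lemma UleJf {n : ℕ} (hn : 1 ≤ n) :
    Ideal.span {(X 0 : MvPolynomial (Fin 4) K) ^ n} * Uid K n ≤ Jf K n := by
  rw [Ideal.mul_le]
  intro r hr u hu
  obtain ⟨c, rfl⟩ := Ideal.mem_span_singleton'.mp hr
  refine Submodule.span_induction ?_ ?_ ?_ ?_ hu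
  · rintro p ⟨i, j, hij, hi, hj, rfl⟩
    rw [mul_assoc]
    exact Ideal.mul_mem_left _ _ (lemA' hn hij)
  · rw [mul_zero]; exact zero_mem _
  · intro p q _ _ hp hq
    rw [mul_add]; exact add_mem hp hq
  · intro a p _ hp
    rw [smul_eq_mul, mul_left_comm]
    exact Ideal.mul_mem_left _ _ hp

lemma lemB' {n : ℕ} (hn : 1 ≤ n) {i j : ℕ} (hij : i + j = n) :
    (X 1 : MvPolynomial (Fin 4) K) ^ n * (X 2 ^ i * X 3 ^ j) ∈ Jf K n := by
  rcases Nat.eq_zero_or_pos i with hi0 | hi0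
  · subst hi0
    have hj' : n = j := by omega
    subst hj'
    have : (X 1 : MvPolynomial (Fin 4) K) ^ n * (X 2 ^ 0 * X 3 ^ n) =
        X 1 ^ n * X 3 ^ n := by ring
    rw [this]
    exact Ideal.mem_sup_left (Ideal.mul_mem_left _ _ (yn_mem _))
  rcases Nat.eq_zero_or_pos j with hj0 | hj0
  · subst hj0
    have hi' : n = i := by omega
    subst hi'
    have : (X 1 : MvPolynomial (Fin 4) K) ^ n * (X 2 ^ n * X 3 ^ 0) =
        X 1 ^ n * X 2 ^ n := by ring
    rw [this]
    exact Ideal.mem_sup_left (Ideal.mul_mem_left _ _ (xn_mem _))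
  · have hu : (X 2 ^ i * X 3 ^ j : MvPolynomial (Fin 4) K) ∈ Uid K n :=
      Ideal.subset_span ⟨i, j, hij, hi0, hj0, rfl⟩
    have := lemTBk hn n _ hu
    obtain ⟨z1, hz1, z2, hz2, hz⟩ := Submodule.mem_sup.mp this
    rw [← hz]
    exact add_mem hz1 (UleJf hn hz2)

lemma spanpow_le (n : ℕ) :
    (Pid K) ^ n ≤ Ideal.span {q | ∃ i j : ℕ, i + j = n ∧ q = (X 2 : MvPolynomial (Fin 4) K) ^ i * X 3 ^ j} := by
  induction n with
  | zero =>
    rw [pow_zero, Ideal.one_eq_top, top_le_iff, Ideal.eq_top_iff_one]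
    exact Ideal.subset_span ⟨0, 0, rfl, by simp⟩
  | succ m ih =>
    rw [pow_succ]
    calc (Pid K) ^ m * Pid K ≤
        Ideal.span {q | ∃ i j : ℕ, i + j = m ∧ q = (X 2 : MvPolynomial (Fin 4) K) ^ i * X 3 ^ j}
          * Pid K := Ideal.mul_mono_left ih
      _ ≤ _ := by
        rw [Pid, Ideal.span_mul_span, Ideal.span_le]
        rintro z hz
        simp only [Set.mem_mul, Set.mem_singleton_iff, Set.mem_insert_iff,
          Set.mem_setOf_eq] at hz
        obtain ⟨a, ⟨i, j, hij, rfl⟩, b, hb, rfl⟩ := hz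
        rcases hb with rfl | hb
        · refine Ideal.subset_span ⟨i + 1, j, by omega, by ring⟩
        · rcases hb with rfl
          refine Ideal.subset_span ⟨i, j + 1, by omega, by ring⟩

lemma lemSN {n : ℕ} (hn : 1 ≤ n) {p : MvPolynomial (Fin 4) K} (hp : p ∈ (Pid K) ^ n) :
    (X 0 : MvPolynomial (Fin 4) K) ^ n * p ∈ Jf K n := by
  have := spanpow_le n hp
  refine Submodule.span_induction ?_ ?_ ?_ ?_ this
  · rintro q ⟨i, j, hij, rfl⟩
    exact lemA' hn hij
  · rw [mul_zero]; exact zero_mem _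
  · intro a b _ _ ha hb
    rw [mul_add]; exact add_mem ha hb
  · intro r a _ ha
    rw [smul_eq_mul, mul_left_comm]
    exact Ideal.mul_mem_left _ _ ha

lemma lemTN {n : ℕ} (hn : 1 ≤ n) {p : MvPolynomial (Fin 4) K} (hp : p ∈ (Pid K) ^ n) :
    (X 1 : MvPolynomial (Fin 4) K) ^ n * p ∈ Jf K n := by
  have := spanpow_le n hp
  refine Submodule.span_induction ?_ ?_ ?_ ?_ this
  · rintro q ⟨i, j, hij, rfl⟩
    exact lemB' hn hij
  · rw [mul_zero]; exact zero_mem _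
  · intro a b _ _ ha hb
    rw [mul_add]; exact add_mem ha hb
  · intro r a _ ha
    rw [smul_eq_mul, mul_left_comm]
    exact Ideal.mul_mem_left _ _ ha


variable (K) in
noncomputable def J2 (n : ℕ) : Ideal (MvPolynomial (Fin 4) K) :=
  Ideal.span {X 2 ^ n, X 3 ^ n, X 0 * X 2 * X 3 ^ (n - 1), X 0 ^ n, X 1 ^ n}

lemma homX0pow (k : ℕ) : IsWeightedHomogeneous w4 ((X 0 : MvPolynomial (Fin 4) K) ^ k) 0 := by
  induction k with
  | zero => rw [pow_zero]; exact isWeightedHomogeneous_one K w4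
  | succ k ih =>
    rw [pow_succ]
    have h := ih.mul (hX0 (K := K))
    simpa using h

lemma homX1pow (k : ℕ) : IsWeightedHomogeneous w4 ((X 1 : MvPolynomial (Fin 4) K) ^ k) 0 := by
  induction k with
  | zero => rw [pow_zero]; exact isWeightedHomogeneous_one K w4
  | succ k ih =>
    rw [pow_succ]
    have h := ih.mul (hX1 (K := K))
    simpa using h

lemma lemG {n : ℕ} (hn : 2 ≤ n) (α β : MvPolynomial (Fin 4) K)
    (h : α * X 0 ^ n + β * X 1 ^ n ∈ (Pid K) ^ n ⊔ Fid K) :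
    α * X 0 ^ n + β * X 1 ^ n ∈ Jf K n := by
  classical
  have hn1 : 1 ≤ n := by omega
  obtain ⟨p, hp, c, hc, heq⟩ := Submodule.mem_sup.mp h
  obtain ⟨hh, hhc⟩ := Ideal.mem_span_singleton'.mp hc
  set Φ : ℕ → MvPolynomial (Fin 4) K → MvPolynomial (Fin 4) K :=
    fun k q => weightedHomogeneousComponent w4 k q with hΦ
  set αl := ∑ k ∈ Finset.range n, Φ k α with hαl
  set βl := ∑ k ∈ Finset.range n, Φ k β with hβl
  have hsupp : ∀ γ : MvPolynomial (Fin 4) K,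
      (γ - ∑ k ∈ Finset.range n, Φ k γ) ∈ (Pid K) ^ n := by
    intro γ
    apply mem_pow_of_supp
    intro d hd
    rw [mem_support_iff, coeff_sub, coeff_trunc] at hd
    by_contra hlt
    rw [if_pos (by omega)] at hd
    simp at hd
  have hα' : α - αl ∈ (Pid K) ^ n := hsupp α
  have hβ' : β - βl ∈ (Pid K) ^ n := hsupp β
  have hlowmem : αl * X 0 ^ n + βl * X 1 ^ n ∈ Fid K := by
    have hterm : ∀ k < n, Φ k (α * X 0 ^ n + β * X 1 ^ n) ∈ Fid K := by
      intro k hk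
      rw [← heq, ← hhc]
      simp only [hΦ]
      rw [map_add]
      rw [phi_kill hp hk, zero_add]
      match k, hk with
      | 0, _ =>
        rw [phi_mul_hom_lt hfhom hh (by omega : (0:ℕ) < 2)]
        exact zero_mem _
      | 1, _ =>
        rw [phi_mul_hom_lt hfhom hh (by omega : (1:ℕ) < 2)]
        exact zero_mem _
      | (k' + 2), _ =>
        rw [phi_mul_hom hfhom hh k']
        exact Ideal.mul_mem_left _ _ f_mem_F
    have hsum : αl * X 0 ^ n + βl * X 1 ^ n =
        ∑ k ∈ Finset.range n, Φ k (α * X 0 ^ n + β * X 1 ^ n) := by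
      rw [hαl, hβl, Finset.sum_mul, Finset.sum_mul, ← Finset.sum_add_distrib]
      refine Finset.sum_congr rfl ?_
      intro k _
      rw [hΦ]
      simp only []
      rw [map_add]
      rw [← phi_mul_hom (homX0pow n) α k, ← phi_mul_hom (homX1pow n) β k]
      norm_num
    rw [hsum]
    refine Ideal.sum_mem _ ?_
    intro k hk
    exact hterm k (Finset.mem_range.mp hk)
  have hkey : α * X 0 ^ n + β * X 1 ^ n =
      ((α - αl) * X 0 ^ n + (β - βl) * X 1 ^ n) + (αl * X 0 ^ n + βl * X 1 ^ n) := by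
    ring
  rw [hkey]
  refine add_mem (add_mem ?_ ?_) (Ideal.mem_sup_right hlowmem)
  · rw [mul_comm]
    exact lemSN hn1 hα'
  · rw [mul_comm]
    exact lemTN hn1 hβ'

lemma J1lePF {n : ℕ} (hn : 1 ≤ n) : J1 K n ≤ (Pid K) ^ n := by
  rw [J1, Ideal.span_le]
  have hx : (X 2 : MvPolynomial (Fin 4) K) ∈ Pid K := Ideal.subset_span (by simp)
  have hy : (X 3 : MvPolynomial (Fin 4) K) ∈ Pid K := Ideal.subset_span (by simp)
  rintro z (rfl | rfl | rfl)
  · exact Ideal.pow_mem_pow hx n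
  · exact Ideal.pow_mem_pow hy n
  · have h1 : (X 2 : MvPolynomial (Fin 4) K) * X 3 ^ (n - 1) ∈ (Pid K) ^ n := by
      have : (Pid K) ^ n = (Pid K) ^ 1 * (Pid K) ^ (n - 1) := by
        rw [← pow_add]; congr 1; omega
      rw [this]
      exact Ideal.mul_mem_mul (by rwa [pow_one]) (Ideal.pow_mem_pow hy _)
    have : (X 0 : MvPolynomial (Fin 4) K) * X 2 * X 3 ^ (n - 1) =
        X 0 * (X 2 * X 3 ^ (n - 1)) := by ring
    rw [this]
    exact Ideal.mul_mem_left _ _ h1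

lemma J2eq (n : ℕ) : J2 K n = J1 K n ⊔ Ideal.span {(X 0 : MvPolynomial (Fin 4) K) ^ n, X 1 ^ n} := by
  rw [J2, J1, ← Ideal.span_union]
  congr 1
  rw [Set.insert_union, Set.insert_union, Set.singleton_union]

lemma eqE {n : ℕ} (hn : 2 ≤ n) :
    Jf K n = ((Pid K) ^ n ⊔ Fid K) ⊓ (J2 K n ⊔ Fid K) := by
  have hn1 : 1 ≤ n := by omega
  apply le_antisymm
  · refine le_inf ?_ ?_
    · rw [Jf]
      exact sup_le_sup_right (J1lePF hn1) _
    · rw [Jf, J2eq]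
      exact sup_le_sup_right le_sup_left _
  · intro g hg
    obtain ⟨hgP, hgQ⟩ := hg
    rw [J2eq, sup_assoc, sup_comm (Ideal.span {(X 0 : MvPolynomial (Fin 4) K) ^ n, X 1 ^ n}),
      ← sup_assoc] at hgQ
    obtain ⟨z1, hz1, u, hu, hgu⟩ := Submodule.mem_sup.mp hgQ
    obtain ⟨j, hj, z2, hz2, hz12⟩ := Submodule.mem_sup.mp hz1
    obtain ⟨α, β, hαβ⟩ := Ideal.mem_span_pair.mp hu
    have hmem : α * X 0 ^ n + β * X 1 ^ n ∈ (Pid K) ^ n ⊔ Fid K := by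
      have hueq : u = g - j - z2 := by rw [← hgu, ← hz12]; ring
      rw [hαβ, hueq]
      refine sub_mem (sub_mem hgP ?_) (Ideal.mem_sup_right hz2)
      exact Ideal.mem_sup_left (J1lePF hn1 hj)
    have hJ : u ∈ Jf K n := by rw [← hαβ]; exact lemG hn α β hmem
    rw [← hgu, ← hz12, Jf]
    exact add_mem (add_mem (Ideal.mem_sup_left hj) (Ideal.mem_sup_right hz2)) (by rwa [Jf] at hJ)


lemma primary_core {n : ℕ} (hn : 1 ≤ n) {a b : MvPolynomial (Fin 4) K}
    (hab : a * b ∈ (Pid K) ^ n ⊔ Fid K) (hb : b ∉ Pid K) :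
    a ∈ (Pid K) ^ n ⊔ Fid K := by
  classical
  -- decomposition of b
  set b0 := weightedHomogeneousComponent w4 0 b with hb0def
  have hb' : b - b0 ∈ Pid K := by
    rw [mem_Pid_iff]
    intro d hd
    rw [mem_support_iff, coeff_sub, hb0def, coeff_weightedHomogeneousComponent] at hd
    by_contra hcon
    push_neg at hcon
    obtain ⟨h2, h3⟩ := hcon
    rw [if_pos (by rw [weight_eq]; omega), sub_self] at hd
    exact hd rfl
  have hb0ne : b0 ≠ 0 := by
    intro h0
    apply hb
    have : b = b - b0 := by rw [h0, sub_zero]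
    rw [this]
    exact hb'
  have hb0hom : IsWeightedHomogeneous w4 b0 0 :=
    weightedHomogeneousComponent_isWeightedHomogeneous 0 b
  have hfb0 : ¬ (sQuad K ∣ b0) := by
    rintro ⟨e, he⟩
    have h1 : weightedHomogeneousComponent w4 0 b0 = b0 :=
      hb0hom.weightedHomogeneousComponent_same
    have h2 : weightedHomogeneousComponent w4 0 b0 = 0 := by
      rw [he, mul_comm]
      exact phi_mul_hom_lt hfhom e (by omega)
    exact hb0ne (by rw [← h1, h2])
  -- main induction
  have claim : ∀ k, k ≤ n → a ∈ (Pid K) ^ k ⊔ Fid K := by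
    intro k
    induction k with
    | zero =>
      intro _
      rw [pow_zero, Ideal.one_eq_top]
      exact Ideal.mem_sup_left Submodule.mem_top
    | succ k ih =>
      intro hk1
      have hk : k < n := by omega
      obtain ⟨p, hp, c, hc, hpc⟩ := Submodule.mem_sup.mp (ih (by omega))
      obtain ⟨g, hg⟩ := Ideal.mem_span_singleton'.mp hc
      set q := weightedHomogeneousComponent w4 k p with hqdef
      have hpq : p - q ∈ (Pid K) ^ (k + 1) := by
        apply mem_pow_of_supp
        intro d hd
        rw [mem_support_iff, coeff_sub, hqdef, coeff_weightedHomogeneousComponent] at hd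
        by_cases hw : Finsupp.weight w4 d = k
        · rw [if_pos hw, sub_self] at hd
          exact absurd rfl hd
        · rw [if_neg hw, sub_zero] at hd
          have := supp_of_mem_pow hp d (mem_support_iff.mpr hd)
          rw [weight_eq] at hw
          omega
      have hq : q ∈ (Pid K) ^ k := by
        apply mem_pow_of_supp
        intro d hd
        rw [mem_support_iff, hqdef, coeff_weightedHomogeneousComponent] at hd
        by_cases hw : Finsupp.weight w4 d = k
        · rw [weight_eq] at hw; omega
        · rw [if_neg hw] at hd; exact absurd rfl hd
      have hqb : q * b ∈ (Pid K) ^ (k + 1) ⊔ Fid K := by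
        have hid : q * b = a * b - (p - q) * b - c * b := by
          rw [← hpc]; ring
        rw [hid]
        refine sub_mem (sub_mem ?_ ?_) ?_
        · refine Submodule.mem_sup.mpr ?_
          obtain ⟨u, hu, v, hv, huv⟩ := Submodule.mem_sup.mp hab
          exact ⟨u, Ideal.pow_le_pow_right hk1 hu, v, hv, huv⟩
        · exact Ideal.mem_sup_left (Ideal.mul_mem_right _ _ hpq)
        · exact Ideal.mem_sup_right (Ideal.mul_mem_right _ _ hc)
      have hqb0 : q * b0 ∈ (Pid K) ^ (k + 1) ⊔ Fid K := by
        have hid : q * b0 = q * b - q * (b - b0) := by ring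
        rw [hid]
        refine sub_mem hqb (Ideal.mem_sup_left ?_)
        rw [pow_succ]
        exact Ideal.mul_mem_mul hq hb'
      obtain ⟨p1, hp1, c1, hc1, hpc1⟩ := Submodule.mem_sup.mp hqb0
      obtain ⟨h1, hh1⟩ := Ideal.mem_span_singleton'.mp hc1
      have hqhom : IsWeightedHomogeneous w4 q k :=
        weightedHomogeneousComponent_isWeightedHomogeneous k p
      have hprodhom : IsWeightedHomogeneous w4 (q * b0) k := by
        have := hqhom.mul hb0hom
        simpa using this
      have hqb0F : q * b0 ∈ Fid K := by
        have hphi : weightedHomogeneousComponent w4 k (q * b0) = q * b0 :=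
          hprodhom.weightedHomogeneousComponent_same
        have hphi2 : weightedHomogeneousComponent w4 k (q * b0) ∈ Fid K := by
          rw [← hpc1, map_add, phi_kill hp1 (by omega), zero_add, ← hh1]
          match k with
          | 0 =>
            rw [phi_mul_hom_lt hfhom h1 (by omega : (0:ℕ) < 2)]
            exact zero_mem _
          | 1 =>
            rw [phi_mul_hom_lt hfhom h1 (by omega : (1:ℕ) < 2)]
            exact zero_mem _
          | (k' + 2) =>
            rw [phi_mul_hom hfhom h1 k']
            exact Ideal.mul_mem_left _ _ f_mem_F
        rwa [hphi] at hphi2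
      have hfq : sQuad K ∣ q := by
        have hdvd : sQuad K ∣ q * b0 := Ideal.mem_span_singleton.mp hqb0F
        rcases (prime_f (K := K)).2.2 q b0 hdvd with h | h
        · exact h
        · exact absurd h hfb0
      have hqF : q ∈ Fid K := Ideal.mem_span_singleton.mpr hfq
      have hfin : a = (p - q) + q + c := by rw [← hpc]; ring
      rw [hfin]
      exact add_mem (add_mem (Ideal.mem_sup_left hpq) (Ideal.mem_sup_right hqF))
        (Ideal.mem_sup_right hc)
  exact claim n le_rfl


end S12


namespace S12

variable {K : Type} [Field K]

variable (K) in
noncomputable def Mid : Ideal (MvPolynomial (Fin 4) K) := Ideal.span {X 0, X 1, X 2, X 3}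

lemma mem_M_iff {p : MvPolynomial (Fin 4) K} : p ∈ Mid K ↔ constantCoeff p = 0 := by
  classical
  have himg : (MvPolynomial.X '' Set.univ : Set (MvPolynomial (Fin 4) K)) =
      {X 0, X 1, X 2, X 3} := by
    ext z
    constructor
    · rintro ⟨i, -, rfl⟩
      fin_cases i <;> simp
    · rintro (rfl | rfl | rfl | rfl) <;> exact ⟨_, trivial, rfl⟩
  rw [Mid, ← himg, mem_ideal_span_X_image]
  constructor
  · intro h
    rw [constantCoeff_eq]
    by_contra hc
    obtain ⟨i, -, hi⟩ := h 0 (mem_support_iff.mpr hc)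
    simp at hi
  · intro h m hm
    by_contra hc
    push_neg at hc
    have hm0 : m = 0 := by
      ext i
      simpa using hc i (Set.mem_univ i)
    rw [hm0] at hm
    rw [constantCoeff_eq] at h
    exact mem_support_iff.mp hm h

lemma M_max : (Mid K).IsMaximal := by
  have hker' : Mid K = RingHom.ker (constantCoeff : MvPolynomial (Fin 4) K →+* K) := by
    ext p
    rw [mem_M_iff, RingHom.mem_ker]
  rw [hker']
  exact RingHom.ker_isMaximal_of_surjective _ (fun k => ⟨C k, constantCoeff_C _ _⟩)

lemma F_le_M : Fid K ≤ Mid K := by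
  rw [Fid, Ideal.span_le]
  rintro z rfl
  rw [SetLike.mem_coe, mem_M_iff, sQuad]
  simp

lemma P_le_M : Pid K ≤ Mid K := by
  rw [Pid, Ideal.span_le]
  rintro z (rfl | rfl) <;> exact Ideal.subset_span (by simp)

lemma one_not_M : (1 : MvPolynomial (Fin 4) K) ∉ Mid K := by
  rw [mem_M_iff]
  simp

lemma PnF_le_M {n : ℕ} (hn : 1 ≤ n) : (Pid K) ^ n ⊔ Fid K ≤ Mid K := by
  refine sup_le ?_ F_le_M
  exact (Ideal.pow_le_self (by omega)).trans P_le_M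

lemma XinM : ∀ i : Fin 4, (X i : MvPolynomial (Fin 4) K) ∈ Mid K := by
  intro i
  fin_cases i <;> exact Ideal.subset_span (by simp)

lemma J2F_le_M {n : ℕ} (hn : 1 ≤ n) : J2 K n ⊔ Fid K ≤ Mid K := by
  refine sup_le ?_ F_le_M
  rw [J2, Ideal.span_le]
  rintro z (rfl | rfl | rfl | rfl | rfl)
  · exact Ideal.pow_mem_of_mem _ (XinM 2) _ (by omega)
  · exact Ideal.pow_mem_of_mem _ (XinM 3) _ (by omega)
  · exact Ideal.mul_mem_right _ _ (Ideal.mul_mem_right _ _ (XinM 0))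
  · exact Ideal.pow_mem_of_mem _ (XinM 0) _ (by omega)
  · exact Ideal.pow_mem_of_mem _ (XinM 1) _ (by omega)

lemma hker : RingHom.ker (π K) = Fid K := by
  rw [π, Ideal.mk_ker, Fid]

lemma hsurj : Function.Surjective (π K) := Ideal.Quotient.mk_surjective

lemma mem_map_iff' {I : Ideal (MvPolynomial (Fin 4) K)} (hFI : Fid K ≤ I)
    (r : MvPolynomial (Fin 4) K) : π K r ∈ Ideal.map (π K) I ↔ r ∈ I := by
  constructor
  · intro h
    obtain ⟨x, hx, hxr⟩ := (Ideal.mem_map_iff_of_surjective _ hsurj).mp h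
    have hker' : r - x ∈ RingHom.ker (π K) := by
      rw [RingHom.mem_ker, map_sub, hxr, sub_self]
    rw [hker] at hker'
    have := add_mem hx (hFI hker')
    simpa using this
  · exact fun h => Ideal.mem_map_of_mem _ h

lemma map_F_bot : Ideal.map (π K) (Fid K) = ⊥ := by
  rw [Fid, Ideal.map_span, Set.image_singleton]
  have h0 : π K (sQuad K) = 0 := Ideal.Quotient.eq_zero_iff_mem.mpr (Ideal.subset_span rfl)
  rw [h0]
  simp

lemma map_supF (I : Ideal (MvPolynomial (Fin 4) K)) :
    Ideal.map (π K) (I ⊔ Fid K) = Ideal.map (π K) I := by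
  rw [Ideal.map_sup, map_F_bot, sup_bot_eq]

lemma map_inf' {I J : Ideal (MvPolynomial (Fin 4) K)} (hI : Fid K ≤ I) (hJ : Fid K ≤ J) :
    Ideal.map (π K) (I ⊓ J) = Ideal.map (π K) I ⊓ Ideal.map (π K) J := by
  apply le_antisymm
  · exact le_inf (Ideal.map_mono inf_le_left) (Ideal.map_mono inf_le_right)
  · intro z hz
    obtain ⟨hz1, hz2⟩ := hz
    obtain ⟨x, hx, hxz⟩ := (Ideal.mem_map_iff_of_surjective _ hsurj).mp hz1
    obtain ⟨y, hy, hyz⟩ := (Ideal.mem_map_iff_of_surjective _ hsurj).mp hz2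
    have hxy : x - y ∈ RingHom.ker (π K) := by
      rw [RingHom.mem_ker, map_sub, hxz, hyz, sub_self]
    rw [hker] at hxy
    have hxJ : x ∈ J := by
      have := add_mem hy (hJ hxy)
      simpa using this
    rw [← hxz]
    exact Ideal.mem_map_of_mem _ ⟨hx, hxJ⟩

end S12

/-- In `A = K[s,t,x,y]/(sx²+txy+sy²)`, for `n ≥ 2` the ideal `(xⁿ, yⁿ, sxy^{n−1})` equals
`(x,y)ⁿ ∩ (xⁿ, yⁿ, sxy^{n−1}, sⁿ, tⁿ)`, and both of these ideals are primary: a primary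
decomposition. -/
theorem stmt_12 (K : Type) [Field K] (n : ℕ) (hn : 2 ≤ n) :
    Ideal.span {π K (X 2 ^ n), π K (X 3 ^ n), π K (X 0 * X 2 * X 3 ^ (n - 1))} =
        (Ideal.span {π K (X 2), π K (X 3)}) ^ n ⊓
          Ideal.span {π K (X 2 ^ n), π K (X 3 ^ n), π K (X 0 * X 2 * X 3 ^ (n - 1)),
            π K (X 0 ^ n), π K (X 1 ^ n)} ∧
      Ideal.IsPrimary ((Ideal.span {π K (X 2), π K (X 3)}) ^ n) ∧
      Ideal.IsPrimary (Ideal.span {π K (X 2 ^ n), π K (X 3 ^ n),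
        π K (X 0 * X 2 * X 3 ^ (n - 1)), π K (X 0 ^ n), π K (X 1 ^ n)}) := by
  classical
  open S12 in
  have hn1 : 1 ≤ n := by omega
  have hPq : Ideal.span {π K (X 2), π K (X 3)} = Ideal.map (π K) (S12.Pid K) := by
    rw [S12.Pid, Ideal.map_span, Set.image_insert_eq, Set.image_singleton]
  have hPqn : (Ideal.span {π K (X 2), π K (X 3)}) ^ n =
      Ideal.map (π K) ((S12.Pid K) ^ n ⊔ S12.Fid K) := by
    rw [hPq, ← Ideal.map_pow, S12.map_supF]
  have hJ1q : Ideal.span {π K (X 2 ^ n), π K (X 3 ^ n), π K (X 0 * X 2 * X 3 ^ (n - 1))} =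
      Ideal.map (π K) (S12.J1 K n) := by
    rw [S12.J1, Ideal.map_span, Set.image_insert_eq, Set.image_insert_eq, Set.image_singleton]
  have hJ2q : Ideal.span {π K (X 2 ^ n), π K (X 3 ^ n), π K (X 0 * X 2 * X 3 ^ (n - 1)),
      π K (X 0 ^ n), π K (X 1 ^ n)} = Ideal.map (π K) (S12.J2 K n) := by
    rw [S12.J2, Ideal.map_span, Set.image_insert_eq, Set.image_insert_eq, Set.image_insert_eq,
      Set.image_insert_eq, Set.image_singleton]
  refine ⟨?_, ?_, ?_⟩
  · -- the equality
    rw [hJ1q, hJ2q, hPqn, ← S12.map_supF (S12.J2 K n), ← S12.map_supF (S12.J1 K n)]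
    have := S12.eqE (K := K) hn
    rw [S12.Jf] at this
    rw [this, S12.map_inf' le_sup_right le_sup_right]
  · -- primary of P^n
    rw [Ideal.isPrimary_iff]
    constructor
    · intro htop
      have h1 : (1 : Aring K) ∈ (Ideal.span {π K (X 2), π K (X 3)}) ^ n := by
        rw [htop]; trivial
      rw [hPqn] at h1
      have hpi1 : π K 1 = 1 := map_one _
      rw [← hpi1] at h1
      have := (S12.mem_map_iff' le_sup_right 1).mp h1
      exact S12.one_not_M (S12.PnF_le_M hn1 this)
    · intro x y hxy
      obtain ⟨a, rfl⟩ := S12.hsurj (K := K) x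
      obtain ⟨b, rfl⟩ := S12.hsurj (K := K) y
      rw [← map_mul, hPqn, S12.mem_map_iff' le_sup_right] at hxy
      by_cases hb : b ∈ S12.Pid K
      · right
        rw [Ideal.mem_radical_iff]
        refine ⟨n, ?_⟩
        rw [← map_pow, hPqn, S12.mem_map_iff' le_sup_right]
        exact Ideal.mem_sup_left (Ideal.pow_mem_pow hb n)
      · left
        rw [hPqn, S12.mem_map_iff' le_sup_right]
        exact S12.primary_core hn1 hxy hb
  · -- primary of J2
    apply Ideal.isPrimary_of_isMaximal_radical
    have hMq : Ideal.map (π K) (S12.Mid K) |>.IsMaximal := by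
      rcases Ideal.map_eq_top_or_isMaximal_of_surjective (π K) S12.hsurj S12.M_max with htop | h
      · exfalso
        have h1 : π K 1 ∈ Ideal.map (π K) (S12.Mid K) := by
          rw [htop]; trivial
        rw [S12.mem_map_iff' S12.F_le_M 1] at h1
        exact S12.one_not_M h1
      · exact h
    have hrad : (Ideal.span {π K (X 2 ^ n), π K (X 3 ^ n),
        π K (X 0 * X 2 * X 3 ^ (n - 1)), π K (X 0 ^ n), π K (X 1 ^ n)}).radical =
        Ideal.map (π K) (S12.Mid K) := by
      apply le_antisymm
      · have hle : Ideal.span {π K (X 2 ^ n), π K (X 3 ^ n),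
            π K (X 0 * X 2 * X 3 ^ (n - 1)), π K (X 0 ^ n), π K (X 1 ^ n)} ≤
            Ideal.map (π K) (S12.Mid K) := by
          rw [hJ2q]
          refine Ideal.map_mono ?_
          exact le_sup_left.trans (S12.J2F_le_M hn1)
        calc _ ≤ (Ideal.map (π K) (S12.Mid K)).radical := Ideal.radical_mono hle
          _ = _ := hMq.isPrime.radical
      · have hMspan : Ideal.map (π K) (S12.Mid K) =
            Ideal.span {π K (X 0), π K (X 1), π K (X 2), π K (X 3)} := by
          rw [S12.Mid, Ideal.map_span, Set.image_insert_eq, Set.image_insert_eq,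
            Set.image_insert_eq, Set.image_singleton]
        rw [hMspan, Ideal.span_le]
        rintro z (rfl | rfl | rfl | rfl)
        · rw [SetLike.mem_coe, Ideal.mem_radical_iff]
          exact ⟨n, by
            rw [← map_pow]
            exact Ideal.subset_span (Or.inr (Or.inr (Or.inr (Or.inl rfl))))⟩
        · rw [SetLike.mem_coe, Ideal.mem_radical_iff]
          exact ⟨n, by
            rw [← map_pow]
            exact Ideal.subset_span (Or.inr (Or.inr (Or.inr (Or.inr rfl))))⟩
        · rw [SetLike.mem_coe, Ideal.mem_radical_iff]
          exact ⟨n, by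
            rw [← map_pow]
            exact Ideal.subset_span (Or.inl rfl)⟩
        · rw [SetLike.mem_coe, Ideal.mem_radical_iff]
          exact ⟨n, by
            rw [← map_pow]
            exact Ideal.subset_span (Or.inr (Or.inl rfl))⟩
    rw [hrad]
    exact hMq
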